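/- (Main theorem, 2D.) Let D = {x ∈ ℝ² : x₂ > 0}. Let u : ℝ² × [0,∞) → ℝ² be C³ in space up to the boundary and C¹ in time up to the boundary, divergence-free, satisfying u(x₁,0,t) = 0 for all x₁ and t, and suppose the scalar vorticity ω = ∂u²/∂x₁ − ∂u¹/∂x₂ satisfies ∂ω/∂t + (u·∇)ω − νΔω − G = 0 in the closed half plane. Let θ(x₁,t) = ω(x₁,0,t) and ψ(x₁,t) = G(x₁,0,t). Then the boundary vorticity evolves according to ∂θ/∂t − 2ν ∂²θ/∂x₁² − ν (∂/∂𝛎)³ u¹ − ψ = 0 on ∂D = ℝ, where ∂/∂𝛎 = −∂/∂x₂, i.e. (∂/∂𝛎)³ u¹ = −(∂³u¹/∂x₂³)(x₁,0,t). -/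

import Mathlib

/-- Partial derivative of a scalar field on `ℝⁿ` in the `i`-th coordinate direction. -/
noncomputable def pd {n : ℕ} (i : Fin n) (f : (Fin n → ℝ) → ℝ) (x : Fin n → ℝ) : ℝ :=
  fderiv ℝ f x (Pi.single i 1)

/-- The scalar vorticity `ω = ∂u²/∂x₁ − ∂u¹/∂x₂` of a planar vector field. -/
noncomputable def vort2 (u : (Fin 2 → ℝ) → Fin 2 → ℝ) (x : Fin 2 → ℝ) : ℝ :=
  pd 0 (fun y => u y 1) x - pd 1 (fun y => u y 0) x

open Set

lemma pd_contDiff {m n : WithTop ℕ∞} {f : (Fin 2 → ℝ) → ℝ} (hmn : m + 1 ≤ n)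
    (hf : ContDiff ℝ n f) (i : Fin 2) : ContDiff ℝ m (pd i f) := by
  have h1 : ContDiff ℝ m (fderiv ℝ f) := hf.fderiv_right hmn
  exact (ContinuousLinearMap.apply ℝ ℝ (Pi.single i 1 : Fin 2 → ℝ)).contDiff.comp h1

lemma deriv_zero_of_Ici {g : ℝ → ℝ} (hg : DifferentiableAt ℝ g 0)
    (h0 : ∀ s : ℝ, 0 ≤ s → g s = 0) : deriv g 0 = 0 := by
  have hu : UniqueDiffWithinAt ℝ (Ici (0:ℝ)) 0 := uniqueDiffOn_Ici 0 0 self_mem_Ici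
  rw [← hg.derivWithin hu]
  exact ((hasDerivWithinAt_const (0:ℝ) (Ici (0:ℝ)) (0:ℝ)).congr
    (fun s hs => h0 s hs) (h0 0 le_rfl)).derivWithin hu

lemma fderiv_dir_zero {f : (Fin 2 → ℝ) → ℝ} {p : Fin 2 → ℝ} (v : Fin 2 → ℝ)
    (hf : DifferentiableAt ℝ f p)
    (h0 : ∀ s : ℝ, 0 ≤ s → f (p + s • v) = 0) :
    fderiv ℝ f p v = 0 := by
  have hg : HasDerivAt (fun s : ℝ => p + s • v) v 0 := by
    simpa using ((hasDerivAt_id (0:ℝ)).smul_const v).const_add p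
  have hfp : HasFDerivAt f (fderiv ℝ f p) ((fun s : ℝ => p + s • v) 0) := by
    simpa using hf.hasFDerivAt
  have hcomp : HasDerivAt (fun s : ℝ => f (p + s • v)) (fderiv ℝ f p v) 0 :=
    hfp.comp_hasDerivAt 0 hg
  rw [← hcomp.deriv]
  exact deriv_zero_of_Ici hcomp.differentiableAt h0

lemma pd_zero_on_halfplane {f : (Fin 2 → ℝ) → ℝ} (hf : Differentiable ℝ f)
    (h0 : ∀ x : Fin 2 → ℝ, 0 ≤ x 1 → f x = 0) (i : Fin 2) {p : Fin 2 → ℝ}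
    (hp : 0 ≤ p 1) : pd i f p = 0 := by
  have hv : (0:ℝ) ≤ (Pi.single i 1 : Fin 2 → ℝ) 1 := by
    fin_cases i <;> simp
  refine fderiv_dir_zero _ (hf p) fun s hs => h0 _ ?_
  have : (p + s • (Pi.single i 1 : Fin 2 → ℝ)) 1
      = p 1 + s * (Pi.single i 1 : Fin 2 → ℝ) 1 := by simp
  rw [this]
  exact add_nonneg hp (mul_nonneg hs hv)

lemma pd0_zero_on_line {f : (Fin 2 → ℝ) → ℝ} (a : ℝ)
    (hf : DifferentiableAt ℝ f ![a, 0])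
    (h0 : ∀ b : ℝ, f ![b, 0] = 0) : pd 0 f ![a, 0] = 0 := by
  refine fderiv_dir_zero _ hf fun s hs => ?_
  have : (![a, 0] + s • (Pi.single 0 1 : Fin 2 → ℝ)) = ![a + s, 0] := by
    funext i; fin_cases i <;> simp
  rw [this]; exact h0 _

lemma deriv_along_line {h : (Fin 2 → ℝ) → ℝ} {b : ℝ} (hd : DifferentiableAt ℝ h ![b, 0]) :
    deriv (fun c : ℝ => h ![c, 0]) b = pd 0 h ![b, 0] := by
  have hline : HasDerivAt (fun c : ℝ => (![c, 0] : Fin 2 → ℝ)) (Pi.single 0 1) b := by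
    rw [hasDerivAt_pi]
    intro i
    fin_cases i
    · simpa using hasDerivAt_id' b
    · simpa using hasDerivAt_const b (0:ℝ)
  exact (hd.hasFDerivAt.comp_hasDerivAt b hline).deriv

lemma pd_sub {f g : (Fin 2 → ℝ) → ℝ} {x : Fin 2 → ℝ} (hf : DifferentiableAt ℝ f x)
    (hg : DifferentiableAt ℝ g x) (i : Fin 2) :
    pd i (fun y => f y - g y) x = pd i f x - pd i g x := by
  simp only [pd, fderiv_fun_sub hf hg, ContinuousLinearMap.sub_apply]

lemma pd_comm {f : (Fin 2 → ℝ) → ℝ} (hf : ContDiff ℝ 2 f) (i j : Fin 2) (x : Fin 2 → ℝ) :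
    pd i (pd j f) x = pd j (pd i f) x := by
  have hdf : Differentiable ℝ (fderiv ℝ f) :=
    (hf.fderiv_right (by norm_num : (1:WithTop ℕ∞) + 1 ≤ 2)).differentiable (by norm_num)
  have key : ∀ w z : Fin 2 → ℝ,
      fderiv ℝ (fun y => fderiv ℝ f y w) x z = fderiv ℝ (fderiv ℝ f) x z w := by
    intro w z
    have := fderiv_clm_apply (hdf x) (differentiableAt_const w)
    rw [this]
    simp
  have hsymm := second_derivative_symmetric (f' := fderiv ℝ f)
    (fun y => (hf.differentiable (by norm_num) y).hasFDerivAt)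
    (hdf x).hasFDerivAt (Pi.single i 1) (Pi.single j 1)
  show fderiv ℝ (fun y => fderiv ℝ f y (Pi.single j 1)) x (Pi.single i 1)
      = fderiv ℝ (fun y => fderiv ℝ f y (Pi.single i 1)) x (Pi.single j 1)
  rw [key, key]
  exact hsymm

/-- main theorem, 2D: for a divergence-free planar velocity field `u` on the
upper half plane, `C³` in space and `C¹` in time up to the boundary, vanishing at the
boundary `{x₂ = 0}`, and whose scalar vorticity `ω = ∂u²/∂x₁ − ∂u¹/∂x₂` satisfies
`∂ω/∂t + (u·∇)ω − νΔω − G = 0` in the closed half plane, the boundary vorticity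
`θ(x₁,t) = ω(x₁,0,t)` evolves by `∂θ/∂t − 2ν ∂²θ/∂x₁² − ν(∂/∂𝛎)³u¹ − ψ = 0`,
where `∂/∂𝛎 = −∂/∂x₂` (so `(∂/∂𝛎)³u¹ = −∂³u¹/∂x₂³` at the boundary) and
`ψ(x₁,t) = G(x₁,0,t)`. -/
theorem boundary_vorticity_dynamics_2d
    (ν : ℝ) (hν : 0 < ν)
    (u : (Fin 2 → ℝ) → ℝ → Fin 2 → ℝ)
    (G : (Fin 2 → ℝ) → ℝ → ℝ)
    (hu_space : ∀ t : ℝ, 0 ≤ t → ContDiff ℝ 3 (fun x => u x t))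
    (hu_time : ∀ x : Fin 2 → ℝ, ContDiff ℝ 1 (fun t => vort2 (fun z => u z t) x))
    (hdiv : ∀ x : Fin 2 → ℝ, 0 ≤ x 1 → ∀ t : ℝ, 0 ≤ t →
      pd 0 (fun y => u y t 0) x + pd 1 (fun y => u y t 1) x = 0)
    (hnoslip : ∀ a : ℝ, ∀ t : ℝ, 0 ≤ t → u ![a, 0] t = 0)
    (htransport : ∀ x : Fin 2 → ℝ, 0 ≤ x 1 → ∀ t : ℝ, 0 ≤ t →
      deriv (fun s => vort2 (fun z => u z s) x) t
        + ∑ i : Fin 2, u x t i * pd i (fun y => vort2 (fun z => u z t) y) x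
        - ν * ∑ i : Fin 2, pd i (pd i (fun y => vort2 (fun z => u z t) y)) x
        - G x t = 0) :
    ∀ a : ℝ, ∀ t : ℝ, 0 ≤ t →
      deriv (fun s => vort2 (fun z => u z s) ![a, 0]) t
        - 2 * ν * deriv (fun b => deriv (fun c => vort2 (fun z => u z t) ![c, 0]) b) a
        - ν * (-(pd 1 (pd 1 (pd 1 (fun y => u y t 0))) ![a, 0]))
        - G ![a, 0] t = 0 := by
  intro a t ht
  have hC : ContDiff ℝ 3 (fun x => u x t) := hu_space t ht
  set U0 : (Fin 2 → ℝ) → ℝ := fun y => u y t 0 with hU0def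
  set U1 : (Fin 2 → ℝ) → ℝ := fun y => u y t 1 with hU1def
  have hCU0 : ContDiff ℝ 3 U0 :=
    (ContinuousLinearMap.proj (R := ℝ) (φ := fun _ : Fin 2 => ℝ) 0).contDiff.comp hC
  have hCU1 : ContDiff ℝ 3 U1 :=
    (ContinuousLinearMap.proj (R := ℝ) (φ := fun _ : Fin 2 => ℝ) 1).contDiff.comp hC
  have h21 : (1:WithTop ℕ∞) + 1 ≤ 2 := by norm_num
  have h32 : (2:WithTop ℕ∞) + 1 ≤ 3 := by norm_num
  have h31 : (1:WithTop ℕ∞) + 1 ≤ 3 := by norm_num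
  have h30 : (0:WithTop ℕ∞) + 1 ≤ 3 := by norm_num
  have h12 : (1:WithTop ℕ∞) ≤ 2 := by norm_num
  have h13 : (1:WithTop ℕ∞) ≤ 3 := by norm_num
  -- the vorticity as a difference
  set W : (Fin 2 → ℝ) → ℝ := fun x => pd 0 U1 x - pd 1 U0 x with hWdef
  have hWeq : ∀ x : Fin 2 → ℝ, vort2 (fun z => u z t) x = W x := fun _ => rfl
  have hCW : ContDiff ℝ 2 W := (pd_contDiff h32 hCU1 0).sub (pd_contDiff h32 hCU0 1)
  -- smoothness of various partials
  have dU0 : ∀ i : Fin 2, ContDiff ℝ 2 (pd i U0) := fun i => pd_contDiff h32 hCU0 i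
  have dU1 : ∀ i : Fin 2, ContDiff ℝ 2 (pd i U1) := fun i => pd_contDiff h32 hCU1 i
  have ddU0 : ∀ i j : Fin 2, ContDiff ℝ 1 (pd i (pd j U0)) :=
    fun i j => pd_contDiff h21 (dU0 j) i
  have ddU1 : ∀ i j : Fin 2, ContDiff ℝ 1 (pd i (pd j U1)) :=
    fun i j => pd_contDiff h21 (dU1 j) i
  have dW : ∀ i : Fin 2, ContDiff ℝ 1 (pd i W) := fun i => pd_contDiff h21 hCW i
  -- the divergence, vanishing on the closed half plane
  set F : (Fin 2 → ℝ) → ℝ := fun x => pd 0 U0 x + pd 1 U1 x with hFdef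
  have hCF : ContDiff ℝ 2 F := (dU0 0).add (dU1 1)
  have hF0 : ∀ x : Fin 2 → ℝ, 0 ≤ x 1 → F x = 0 := fun x hx => hdiv x hx t ht
  have hp1 : (![a, 0] : Fin 2 → ℝ) 1 = 0 := rfl
  have hp1' : (0:ℝ) ≤ (![a, 0] : Fin 2 → ℝ) 1 := le_of_eq hp1.symm
  -- first derivatives of F vanish on the closed half plane
  have hF1 : ∀ i : Fin 2, ∀ x : Fin 2 → ℝ, 0 ≤ x 1 → pd i F x = 0 := fun i x hx =>
    pd_zero_on_halfplane (hCF.differentiable (by norm_num)) hF0 i hx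
  -- second mixed derivative of F vanishes at the boundary
  have hF2 : pd 1 (pd 0 F) ![a, 0] = 0 :=
    pd_zero_on_halfplane ((pd_contDiff h21 hCF 0).differentiable (by norm_num)) (hF1 0) 1 hp1'
  -- no-slip: U1 vanishes on the boundary line, hence so do its tangential derivatives
  have hL0 : ∀ b : ℝ, U1 ![b, 0] = 0 := fun b => congrFun (hnoslip b t ht) 1
  have hL1 : ∀ b : ℝ, pd 0 U1 ![b, 0] = 0 := fun b =>
    pd0_zero_on_line b ((hCU1.differentiable (by norm_num)) _) hL0
  have hL2 : ∀ b : ℝ, pd 0 (pd 0 U1) ![b, 0] = 0 := fun b =>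
    pd0_zero_on_line b (((dU1 0).differentiable (by norm_num)) _) hL1
  have hL3 : pd 0 (pd 0 (pd 0 U1)) ![a, 0] = 0 :=
    pd0_zero_on_line a (((ddU1 0 0).differentiable (by norm_num)) _) hL2
  -- pd 1 U1 = F - pd 0 U0  pointwise
  have hsub : pd 1 U1 = fun y => F y - pd 0 U0 y := by
    funext y; simp only [hFdef]; ring
  -- Clairaut swaps
  have hswap01U1 : pd 1 (pd 0 U1) = pd 0 (pd 1 U1) := by
    funext x; exact pd_comm (hCU1.of_le (by norm_num)) 1 0 x
  have hswapU0 : pd 0 (pd 1 U0) = pd 1 (pd 0 U0) := by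
    funext x; exact pd_comm (hCU0.of_le (by norm_num)) 0 1 x
  -- key identity: pd 1 (pd 0 U1) = pd 0 F - pd 0 (pd 0 U0)
  have hA : pd 1 (pd 0 U1) = fun x => pd 0 F x - pd 0 (pd 0 U0) x := by
    rw [hswap01U1, hsub]
    funext x
    exact pd_sub ((hCF.differentiable (by norm_num)) x) (((dU0 0).differentiable (by norm_num)) x) 0
  -- pd 1 (pd 1 (pd 0 U1)) at the boundary
  have hB : pd 1 (pd 1 (pd 0 U1)) ![a, 0] = -(pd 1 (pd 0 (pd 0 U0)) ![a, 0]) := by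
    rw [hA]
    rw [pd_sub (((pd_contDiff h21 hCF 0).differentiable (by norm_num)) _)
      (((ddU0 0 0).differentiable (by norm_num)) _) 1]
    rw [hF2]; ring
  -- pd 0 W and pd 1 W as differences
  have hW0 : pd 0 W = fun x => pd 0 (pd 0 U1) x - pd 0 (pd 1 U0) x := by
    funext x
    exact pd_sub (((dU1 0).differentiable (by norm_num)) x) (((dU0 1).differentiable (by norm_num)) x) 0
  have hW1 : pd 1 W = fun x => pd 1 (pd 0 U1) x - pd 1 (pd 1 U0) x := by
    funext x
    exact pd_sub (((dU1 0).differentiable (by norm_num)) x) (((dU0 1).differentiable (by norm_num)) x) 1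
  -- second derivatives of W at the boundary
  have hD : pd 0 (pd 0 W) ![a, 0] = -(pd 1 (pd 0 (pd 0 U0)) ![a, 0]) := by
    rw [hW0]
    rw [pd_sub (((ddU1 0 0).differentiable (by norm_num)) _) (((ddU0 0 1).differentiable (by norm_num)) _) 0]
    rw [hL3, hswapU0]
    have := pd_comm ((dU0 0).of_le le_rfl) 0 1 (![a, 0] : Fin 2 → ℝ)
    rw [this]; ring
  have hE : pd 1 (pd 1 W) ![a, 0]
      = pd 0 (pd 0 W) ![a, 0] - pd 1 (pd 1 (pd 1 U0)) ![a, 0] := by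
    rw [hW1]
    rw [pd_sub (((ddU1 1 0).differentiable (by norm_num)) _) (((ddU0 1 1).differentiable (by norm_num)) _) 1]
    rw [hB, hD]
  -- the transport equation at the boundary point
  have ht0 := htransport ![a, 0] hp1' t ht
  have hadv : ∑ i : Fin 2, u ![a, 0] t i * pd i (fun y => vort2 (fun z => u z t) y) ![a, 0]
      = 0 := by
    rw [hnoslip a t ht]
    simp
  rw [hadv] at ht0
  -- rewrite vorticity as W everywhere
  have hfun : (fun y => vort2 (fun z => u z t) y) = W := rfl
  rw [hfun] at ht0
  rw [Fin.sum_univ_two] at ht0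
  -- the boundary second tangential derivative equals pd 0 (pd 0 W)
  have hinner : ∀ b : ℝ, deriv (fun c => vort2 (fun z => u z t) ![c, 0]) b
      = pd 0 W ![b, 0] := by
    intro b
    have : (fun c : ℝ => vort2 (fun z => u z t) ![c, 0]) = fun c : ℝ => W ![c, 0] := rfl
    rw [this]
    exact deriv_along_line ((hCW.differentiable (by norm_num)) _)
  have houter : deriv (fun b => deriv (fun c => vort2 (fun z => u z t) ![c, 0]) b) a
      = pd 0 (pd 0 W) ![a, 0] := by
    have h1 : (fun b => deriv (fun c => vort2 (fun z => u z t) ![c, 0]) b)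
        = fun b => pd 0 W ![b, 0] := funext hinner
    rw [h1]
    exact deriv_along_line (((dW 0).differentiable (by norm_num)) _)
  rw [houter]
  have hX : pd 1 (pd 1 (pd 1 (fun y => u y t 0))) ![a, 0]
      = pd 1 (pd 1 (pd 1 U0)) ![a, 0] := rfl
  rw [hX]
  -- finish by linear arithmetic
  rw [hE] at ht0
  linarith [ht0]
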